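/- The set C₁ = {(x, y) ∈ ℝ × ℝ : y² = x³ − x and −1 ≤ x ≤ 0} is nonempty, compact, and connected as a subset of ℝ². -/

import Mathlib

/-- The oval `C₁ = {(x,y) : y² = x³ − x, −1 ≤ x ≤ 0}` of the real elliptic curve
is nonempty, compact and connected. -/
theorem real_elliptic_curve_oval_compact_connected :
    ({p : ℝ × ℝ | p.2 ^ 2 = p.1 ^ 3 - p.1 ∧ -1 ≤ p.1 ∧ p.1 ≤ 0}).Nonempty ∧
    IsCompact {p : ℝ × ℝ | p.2 ^ 2 = p.1 ^ 3 - p.1 ∧ -1 ≤ p.1 ∧ p.1 ≤ 0} ∧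
    IsConnected {p : ℝ × ℝ | p.2 ^ 2 = p.1 ^ 3 - p.1 ∧ -1 ≤ p.1 ∧ p.1 ≤ 0} := by
  set f : ℝ → ℝ × ℝ := fun x => (x, Real.sqrt (x ^ 3 - x)) with hf
  set g : ℝ → ℝ × ℝ := fun x => (x, -Real.sqrt (x ^ 3 - x)) with hg
  have hcont : Continuous fun x : ℝ => Real.sqrt (x ^ 3 - x) :=
    Real.continuous_sqrt.comp (by continuity)
  have hcf : Continuous f := by continuity
  have hcg : Continuous g := by continuity
  have key : {p : ℝ × ℝ | p.2 ^ 2 = p.1 ^ 3 - p.1 ∧ -1 ≤ p.1 ∧ p.1 ≤ 0}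
      = f '' Set.Icc (-1) 0 ∪ g '' Set.Icc (-1) 0 := by
    ext ⟨x, y⟩
    simp only [Set.mem_setOf_eq, Set.mem_union, Set.mem_image, hf, hg]
    constructor
    · rintro ⟨heq, h1, h2⟩
      have hnn : 0 ≤ x ^ 3 - x := heq ▸ sq_nonneg y
      have habs : Real.sqrt (x ^ 3 - x) = |y| := by
        rw [← heq, Real.sqrt_sq_eq_abs]
      rcases le_or_gt 0 y with hy | hy
      · left; exact ⟨x, ⟨h1, h2⟩, by rw [Prod.ext_iff]; exact ⟨rfl, by
          simp [habs, abs_of_nonneg hy]⟩⟩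
      · right; exact ⟨x, ⟨h1, h2⟩, by rw [Prod.ext_iff]; exact ⟨rfl, by
          simp [habs, abs_of_neg hy]⟩⟩
    · rintro (⟨x', ⟨h1, h2⟩, heq⟩ | ⟨x', ⟨h1, h2⟩, heq⟩) <;>
      · obtain ⟨hx, hy⟩ := Prod.mk.injEq .. ▸ heq
        subst hx
        have hnn : 0 ≤ x' ^ 3 - x' := by nlinarith [mul_nonneg (mul_nonneg (neg_nonneg.2 h2) (by linarith : (0:ℝ) ≤ x' + 1)) (by linarith : (0:ℝ) ≤ 1 - x')]
        refine ⟨?_, h1, h2⟩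
        rw [← hy]
        nlinarith [Real.sq_sqrt hnn]
  refine ⟨⟨(0, 0), by norm_num⟩, ?_, ?_⟩
  · rw [key]
    exact ((isCompact_Icc.image hcf).union (isCompact_Icc.image hcg))
  · rw [key]
    apply IsConnected.union ⟨(0, 0), ?_, ?_⟩
    · exact (isConnected_Icc (by norm_num)).image f hcf.continuousOn
    · exact (isConnected_Icc (by norm_num)).image g hcg.continuousOn
    · exact ⟨0, by norm_num, by simp [hf]⟩
    · exact ⟨0, by norm_num, by simp [hg]⟩
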